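/- Regard the real quaternions ℍ as a four-dimensional real inner product space with inner product ⟨x,y⟩ = Re(x·conj(y)). Let S be the 48-element set given by the union of the 24 Hurwitz units with the 24 quaternions (ε a + ε' b)/√2 for two-element subsets {a,b} ⊆ {1,i,j,k} and ε, ε' ∈ {±1} (the binary octahedral group 2O). Then S is closed under the reflection s_α for every α ∈ S: for all α, v ∈ S, v − 2⟨v,α⟩α ∈ S. Hence the 48 rotors generated by the reflections of B₃, viewed as vectors in 4-dimensional Euclidean space, form a root system (a rescaled root system of type F₄). -/

import Mathlib

noncomputable section

/-- The quaternion unit `i`. -/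
def qi : Quaternion ℝ := ⟨0, 1, 0, 0⟩
/-- The quaternion unit `j`. -/
def qj : Quaternion ℝ := ⟨0, 0, 1, 0⟩
/-- The quaternion unit `k`. -/
def qk : Quaternion ℝ := ⟨0, 0, 0, 1⟩

/-- The sign set `{1, -1}`. -/
def pm : Set ℝ := {1, -1}

/-- The 24 Hurwitz units `±1, ±i, ±j, ±k, (±1±i±j±k)/2`. -/
def hurwitzUnits : Set (Quaternion ℝ) :=
  {1, -1, qi, -qi, qj, -qj, qk, -qk} ∪
  {x | ∃ ε₀ ∈ pm, ∃ ε₁ ∈ pm, ∃ ε₂ ∈ pm, ∃ ε₃ ∈ pm,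
    x = (2 : ℝ)⁻¹ • (ε₀ • (1 : Quaternion ℝ) + ε₁ • qi + ε₂ • qj + ε₃ • qk)}

/-- The 24 quaternions `(ε a + ε' b)/√2` where `{a, b}` ranges over the
two-element subsets of `{1, i, j, k}` and `ε, ε' ∈ {±1}`. -/
def octPart : Set (Quaternion ℝ) :=
  {x | ∃ ε ∈ pm, ∃ ε' ∈ pm, ∃ a ∈ ({1, qi, qj, qk} : Set (Quaternion ℝ)),
    ∃ b ∈ ({1, qi, qj, qk} : Set (Quaternion ℝ)), a ≠ b ∧
      x = (Real.sqrt 2)⁻¹ • (ε • a + ε' • b)}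

/-- The 48-element set of the binary octahedral group `2O`. -/
def binaryOct : Set (Quaternion ℝ) := hurwitzUnits ∪ octPart

/-- The real inner product `⟨x, y⟩ = Re(x · conj y)` on ℍ ≅ ℝ⁴. -/
def qInner (x y : Quaternion ℝ) : ℝ := (x * star y).re

/-! ### Integer bookkeeping -/

abbrev Z4 : Type := ℤ × ℤ × ℤ × ℤ

def qmul (x y : Z4) : Z4 :=
  (x.1 * y.1 - x.2.1 * y.2.1 - x.2.2.1 * y.2.2.1 - x.2.2.2 * y.2.2.2,
   x.1 * y.2.1 + x.2.1 * y.1 + x.2.2.1 * y.2.2.2 - x.2.2.2 * y.2.2.1,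
   x.1 * y.2.2.1 - x.2.1 * y.2.2.2 + x.2.2.1 * y.1 + x.2.2.2 * y.2.1,
   x.1 * y.2.2.2 + x.2.1 * y.2.2.1 - x.2.2.1 * y.2.1 + x.2.2.2 * y.1)

def qstar (x : Z4) : Z4 := (x.1, -x.2.1, -x.2.2.1, -x.2.2.2)
def qsc (k : ℤ) (x : Z4) : Z4 := (k * x.1, k * x.2.1, k * x.2.2.1, k * x.2.2.2)
def qneg (x : Z4) : Z4 := qsc (-1) x
def nq (x : Z4) : ℤ := x.1 * x.1 + x.2.1 * x.2.1 + x.2.2.1 * x.2.2.1 + x.2.2.2 * x.2.2.2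
def refl3 (a b : Z4) : Z4 := qneg (qmul (qmul a (qstar b)) a)

def pmZ : Finset ℤ := {1, -1}
def B4 : Finset Z4 := {(2, 0, 0, 0), (0, 2, 0, 0), (0, 0, 2, 0), (0, 0, 0, 2)}
def H8 : Finset Z4 :=
  {(2, 0, 0, 0), (-2, 0, 0, 0), (0, 2, 0, 0), (0, -2, 0, 0),
   (0, 0, 2, 0), (0, 0, -2, 0), (0, 0, 0, 2), (0, 0, 0, -2)}

def Hfin : Finset Z4 :=
  {(2, 0, 0, 0),
  (-2, 0, 0, 0),
  (0, 2, 0, 0),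
  (0, -2, 0, 0),
  (0, 0, 2, 0),
  (0, 0, -2, 0),
  (0, 0, 0, 2),
  (0, 0, 0, -2),
  (1, 1, 1, 1),
  (1, 1, 1, -1),
  (1, 1, -1, 1),
  (1, 1, -1, -1),
  (1, -1, 1, 1),
  (1, -1, 1, -1),
  (1, -1, -1, 1),
  (1, -1, -1, -1),
  (-1, 1, 1, 1),
  (-1, 1, 1, -1),
  (-1, 1, -1, 1),
  (-1, 1, -1, -1),
  (-1, -1, 1, 1),
  (-1, -1, 1, -1),
  (-1, -1, -1, 1),
  (-1, -1, -1, -1)}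

def Ofin : Finset Z4 :=
  {(2, 2, 0, 0),
  (2, -2, 0, 0),
  (-2, 2, 0, 0),
  (-2, -2, 0, 0),
  (2, 0, 2, 0),
  (2, 0, -2, 0),
  (-2, 0, 2, 0),
  (-2, 0, -2, 0),
  (2, 0, 0, 2),
  (2, 0, 0, -2),
  (-2, 0, 0, 2),
  (-2, 0, 0, -2),
  (0, 2, 2, 0),
  (0, 2, -2, 0),
  (0, -2, 2, 0),
  (0, -2, -2, 0),
  (0, 2, 0, 2),
  (0, 2, 0, -2),
  (0, -2, 0, 2),
  (0, -2, 0, -2),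
  (0, 0, 2, 2),
  (0, 0, 2, -2),
  (0, 0, -2, 2),
  (0, 0, -2, -2)}

set_option maxHeartbeats 1000000 in
lemma reflHH : ∀ a ∈ Hfin, ∀ b ∈ Hfin, ∃ c ∈ Hfin, refl3 a b = qsc 4 c := by decide

set_option maxHeartbeats 1000000 in
lemma reflHO : ∀ a ∈ Hfin, ∀ b ∈ Ofin, ∃ c ∈ Ofin, refl3 a b = qsc 4 c := by decide

set_option maxHeartbeats 1000000 in
lemma reflOH : ∀ a ∈ Ofin, ∀ b ∈ Hfin, ∃ c ∈ Hfin, refl3 a b = qsc 8 c := by decide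

set_option maxHeartbeats 1000000 in
lemma reflOO : ∀ a ∈ Ofin, ∀ b ∈ Ofin, ∃ c ∈ Ofin, refl3 a b = qsc 8 c := by decide

set_option maxHeartbeats 1000000 in
lemma normH : ∀ a ∈ Hfin, nq a = 4 := by decide

set_option maxHeartbeats 1000000 in
lemma normO : ∀ a ∈ Ofin, nq a = 8 := by decide

lemma signs_mem_Hfin :
    ∀ n₀ ∈ pmZ, ∀ n₁ ∈ pmZ, ∀ n₂ ∈ pmZ, ∀ n₃ ∈ pmZ, ((n₀, n₁, n₂, n₃) : Z4) ∈ Hfin := by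
  decide

lemma Hfin_cases : ∀ a ∈ Hfin, a ∈ H8 ∨
    (a.1 ∈ pmZ ∧ a.2.1 ∈ pmZ ∧ a.2.2.1 ∈ pmZ ∧ a.2.2.2 ∈ pmZ) := by decide

lemma comb_mem_Ofin : ∀ n ∈ pmZ, ∀ n' ∈ pmZ, ∀ p ∈ B4, ∀ p' ∈ B4, p ≠ p' →
    qsc n p + qsc n' p' ∈ Ofin := by decide

set_option maxHeartbeats 1000000 in
lemma Ofin_cases : ∀ c ∈ Ofin, ∃ n ∈ pmZ, ∃ n' ∈ pmZ, ∃ p ∈ B4, ∃ p' ∈ B4,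
    p ≠ p' ∧ c = qsc n p + qsc n' p' := by decide

/-! ### The bridge to `Quaternion ℝ` -/

def toQ (x : Z4) : Quaternion ℝ := ⟨(x.1 : ℝ), (x.2.1 : ℝ), (x.2.2.1 : ℝ), (x.2.2.2 : ℝ)⟩

@[simp] lemma toQ_re (x : Z4) : (toQ x).re = (x.1 : ℝ) := rfl
@[simp] lemma toQ_imI (x : Z4) : (toQ x).imI = (x.2.1 : ℝ) := rfl
@[simp] lemma toQ_imJ (x : Z4) : (toQ x).imJ = (x.2.2.1 : ℝ) := rfl
@[simp] lemma toQ_imK (x : Z4) : (toQ x).imK = (x.2.2.2 : ℝ) := rfl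
@[simp] lemma q1_re : (1 : Quaternion ℝ).re = 1 := rfl
@[simp] lemma q1_imI : (1 : Quaternion ℝ).imI = 0 := rfl
@[simp] lemma q1_imJ : (1 : Quaternion ℝ).imJ = 0 := rfl
@[simp] lemma q1_imK : (1 : Quaternion ℝ).imK = 0 := rfl
@[simp] lemma qi_re : qi.re = 0 := rfl
@[simp] lemma qi_imI : qi.imI = 1 := rfl
@[simp] lemma qi_imJ : qi.imJ = 0 := rfl
@[simp] lemma qi_imK : qi.imK = 0 := rfl
@[simp] lemma qj_re : qj.re = 0 := rfl
@[simp] lemma qj_imI : qj.imI = 0 := rfl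
@[simp] lemma qj_imJ : qj.imJ = 1 := rfl
@[simp] lemma qj_imK : qj.imK = 0 := rfl
@[simp] lemma qk_re : qk.re = 0 := rfl
@[simp] lemma qk_imI : qk.imI = 0 := rfl
@[simp] lemma qk_imJ : qk.imJ = 0 := rfl
@[simp] lemma qk_imK : qk.imK = 1 := rfl

lemma toQ_mul (x y : Z4) : toQ (qmul x y) = toQ x * toQ y := by
  apply Quaternion.ext <;> simp [qmul] <;> push_cast <;> ring

lemma toQ_star (x : Z4) : toQ (qstar x) = star (toQ x) := by
  apply Quaternion.ext <;> simp [qstar]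

lemma toQ_sc (k : ℤ) (x : Z4) : toQ (qsc k x) = (k : ℝ) • toQ x := by
  apply Quaternion.ext <;> simp [qsc] <;> push_cast <;> ring

lemma toQ_add (x y : Z4) : toQ (x + y) = toQ x + toQ y := by
  apply Quaternion.ext <;> simp <;> push_cast <;> ring

lemma toQ_refl3 (a b : Z4) : toQ (refl3 a b) = -(toQ a * star (toQ b) * toQ a) := by
  rw [refl3, qneg, toQ_sc, toQ_mul, toQ_mul, toQ_star]
  push_cast
  simp [neg_smul, one_smul]

lemma toQ_inj : Function.Injective toQ := by
  intro x y h
  unfold toQ at h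
  replace h := QuaternionAlgebra.mk.inj h
  obtain ⟨h1, h2, h3, h4⟩ := h
  exact Prod.ext (by exact_mod_cast h1) (Prod.ext (by exact_mod_cast h2)
    (Prod.ext (by exact_mod_cast h3) (by exact_mod_cast h4)))

lemma qInner_toQ (x y : Z4) :
    qInner (toQ x) (toQ y) =
      ((x.1 * y.1 + x.2.1 * y.2.1 + x.2.2.1 * y.2.2.1 + x.2.2.2 * y.2.2.2 : ℤ) : ℝ) := by
  simp only [qInner, toQ_re, toQ_imI, toQ_imJ, toQ_imK, Quaternion.re_mul, Quaternion.re_star,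
    Quaternion.imI_star, Quaternion.imJ_star, Quaternion.imK_star]
  push_cast
  ring

lemma qInner_smul (r : ℝ) (x y : Quaternion ℝ) :
    qInner (r • x) (r • y) = r * r * qInner x y := by
  simp only [qInner, Quaternion.star_smul, smul_mul_assoc, mul_smul_comm,
    Quaternion.re_smul, smul_eq_mul]
  ring

lemma toQ_eq_comb (x : Z4) :
    toQ x = (x.1 : ℝ) • (1 : Quaternion ℝ) + (x.2.1 : ℝ) • qi + (x.2.2.1 : ℝ) • qj +
      (x.2.2.2 : ℝ) • qk := by
  apply Quaternion.ext <;> simp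

lemma pmZ_cast {n : ℤ} (h : n ∈ pmZ) : ((n : ℝ)) ∈ pm := by
  fin_cases h <;> simp [pm] <;> norm_num

lemma pm_int {ε : ℝ} (h : ε ∈ pm) : ∃ n ∈ pmZ, ε = (n : ℝ) := by
  rcases h with rfl | rfl
  · exact ⟨1, by decide, by norm_num⟩
  · exact ⟨-1, by decide, by norm_num⟩

/-! ### Canonical forms for the two pieces -/

lemma hurwitz_fwd {x : Quaternion ℝ} (h : x ∈ hurwitzUnits) :
    ∃ a ∈ Hfin, x = (2 : ℝ)⁻¹ • toQ a := by
  rcases h with h | ⟨ε₀, h0, ε₁, h1, ε₂, h2, ε₃, h3, rfl⟩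
  · rcases h with rfl | rfl | rfl | rfl | rfl | rfl | rfl | h
    · exact ⟨(2, 0, 0, 0), by decide, by apply Quaternion.ext <;> simp <;> norm_num⟩
    · exact ⟨(-2, 0, 0, 0), by decide, by apply Quaternion.ext <;> simp <;> norm_num⟩
    · exact ⟨(0, 2, 0, 0), by decide, by apply Quaternion.ext <;> simp <;> norm_num⟩
    · exact ⟨(0, -2, 0, 0), by decide, by apply Quaternion.ext <;> simp <;> norm_num⟩
    · exact ⟨(0, 0, 2, 0), by decide, by apply Quaternion.ext <;> simp <;> norm_num⟩
    · exact ⟨(0, 0, -2, 0), by decide, by apply Quaternion.ext <;> simp <;> norm_num⟩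
    · exact ⟨(0, 0, 0, 2), by decide, by apply Quaternion.ext <;> simp <;> norm_num⟩
    · rw [Set.mem_singleton_iff] at h
      subst h
      exact ⟨(0, 0, 0, -2), by decide, by apply Quaternion.ext <;> simp <;> norm_num⟩
  · obtain ⟨n₀, hn0, rfl⟩ := pm_int h0
    obtain ⟨n₁, hn1, rfl⟩ := pm_int h1
    obtain ⟨n₂, hn2, rfl⟩ := pm_int h2
    obtain ⟨n₃, hn3, rfl⟩ := pm_int h3
    refine ⟨(n₀, n₁, n₂, n₃), signs_mem_Hfin n₀ hn0 n₁ hn1 n₂ hn2 n₃ hn3, ?_⟩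
    rw [toQ_eq_comb]

lemma hurwitz_bwd : ∀ a ∈ Hfin, (2 : ℝ)⁻¹ • toQ a ∈ hurwitzUnits := by
  intro a ha
  rcases Hfin_cases a ha with h | ⟨h0, h1, h2, h3⟩
  · left
    fin_cases h
    · exact Or.inl (by apply Quaternion.ext <;> simp <;> norm_num)
    · exact Or.inr (Or.inl (by apply Quaternion.ext <;> simp <;> norm_num))
    · exact Or.inr (Or.inr (Or.inl (by apply Quaternion.ext <;> simp <;> norm_num)))
    · exact Or.inr (Or.inr (Or.inr (Or.inl
        (by apply Quaternion.ext <;> simp <;> norm_num))))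
    · exact Or.inr (Or.inr (Or.inr (Or.inr (Or.inl
        (by apply Quaternion.ext <;> simp <;> norm_num)))))
    · exact Or.inr (Or.inr (Or.inr (Or.inr (Or.inr (Or.inl
        (by apply Quaternion.ext <;> simp <;> norm_num))))))
    · exact Or.inr (Or.inr (Or.inr (Or.inr (Or.inr (Or.inr (Or.inl
        (by apply Quaternion.ext <;> simp <;> norm_num)))))))
    · exact Or.inr (Or.inr (Or.inr (Or.inr (Or.inr (Or.inr (Or.inr
        (by apply Quaternion.ext <;> simp <;> norm_num)))))))
  · right
    exact ⟨(a.1 : ℝ), pmZ_cast h0, (a.2.1 : ℝ), pmZ_cast h1, (a.2.2.1 : ℝ), pmZ_cast h2,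
      (a.2.2.2 : ℝ), pmZ_cast h3, by rw [toQ_eq_comb]⟩

lemma base_fwd {x : Quaternion ℝ} (h : x ∈ ({1, qi, qj, qk} : Set (Quaternion ℝ))) :
    ∃ p ∈ B4, x = (2 : ℝ)⁻¹ • toQ p := by
  rcases h with rfl | rfl | rfl | h
  · exact ⟨(2, 0, 0, 0), by decide, by apply Quaternion.ext <;> simp <;> norm_num⟩
  · exact ⟨(0, 2, 0, 0), by decide, by apply Quaternion.ext <;> simp <;> norm_num⟩
  · exact ⟨(0, 0, 2, 0), by decide, by apply Quaternion.ext <;> simp <;> norm_num⟩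
  · rw [Set.mem_singleton_iff] at h
    subst h
    exact ⟨(0, 0, 0, 2), by decide, by apply Quaternion.ext <;> simp <;> norm_num⟩

lemma base_bwd : ∀ p ∈ B4, (2 : ℝ)⁻¹ • toQ p ∈ ({1, qi, qj, qk} : Set (Quaternion ℝ)) := by
  intro p hp
  fin_cases hp
  · exact Or.inl (by apply Quaternion.ext <;> simp <;> norm_num)
  · exact Or.inr (Or.inl (by apply Quaternion.ext <;> simp <;> norm_num))
  · exact Or.inr (Or.inr (Or.inl (by apply Quaternion.ext <;> simp <;> norm_num)))
  · exact Or.inr (Or.inr (Or.inr (by apply Quaternion.ext <;> simp <;> norm_num)))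

lemma oct_fwd {x : Quaternion ℝ} (h : x ∈ octPart) :
    ∃ c ∈ Ofin, x = ((Real.sqrt 2)⁻¹ * (2 : ℝ)⁻¹) • toQ c := by
  obtain ⟨ε, hε, ε', hε', a, ha, b, hb, hab, rfl⟩ := h
  obtain ⟨n, hn, rfl⟩ := pm_int hε
  obtain ⟨n', hn', rfl⟩ := pm_int hε'
  obtain ⟨p, hp, rfl⟩ := base_fwd ha
  obtain ⟨p', hp', rfl⟩ := base_fwd hb
  have hne : p ≠ p' := fun hpp => hab (by rw [hpp])
  refine ⟨qsc n p + qsc n' p', comb_mem_Ofin n hn n' hn' p hp p' hp' hne, ?_⟩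
  rw [toQ_add, toQ_sc, toQ_sc]
  module

lemma oct_bwd : ∀ c ∈ Ofin, ((Real.sqrt 2)⁻¹ * (2 : ℝ)⁻¹) • toQ c ∈ octPart := by
  intro c hc
  obtain ⟨n, hn, n', hn', p, hp, p', hp', hne, rfl⟩ := Ofin_cases c hc
  have hne' : (2 : ℝ)⁻¹ • toQ p ≠ (2 : ℝ)⁻¹ • toQ p' := by
    intro h
    apply hne
    apply toQ_inj
    have h2 : (2 : ℝ)⁻¹ ≠ 0 := by norm_num
    exact smul_right_injective (Quaternion ℝ) h2 h
  refine ⟨(n : ℝ), pmZ_cast hn, (n' : ℝ), pmZ_cast hn', (2 : ℝ)⁻¹ • toQ p, base_bwd p hp,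
    (2 : ℝ)⁻¹ • toQ p', base_bwd p' hp', hne', ?_⟩
  rw [toQ_add, toQ_sc, toQ_sc]
  module

/-! ### The reflection identity -/

lemma reflect_eq (α v : Quaternion ℝ) (h : qInner α α = 1) :
    v - (2 * qInner v α) • α = -(α * star v * α) := by
  have hns : Quaternion.normSq α = qInner α α := by
    rw [qInner, Quaternion.self_mul_star, Quaternion.re_coe]
  have h1 : star α * α = 1 := by
    rw [Quaternion.star_mul_self, hns, h, Quaternion.coe_one]
  have h2 : (2 * qInner v α) • α = v * (star α * α) + α * star v * α := by
    rw [← Quaternion.coe_mul_eq_smul]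
    simp only [qInner]
    rw [← Quaternion.self_add_star', star_mul, star_star]
    noncomm_ring
  rw [h2, h1, mul_one]
  abel

lemma sandwich (r s : ℝ) (x y : Quaternion ℝ) :
    -((r • x) * star (s • y) * (r • x)) = (r * r * s) • -(x * star y * x) := by
  rw [Quaternion.star_smul]
  simp only [smul_mul_assoc, mul_smul_comm, smul_smul, smul_neg, neg_neg]
  module

/-! ### Norms are one -/

lemma qInner_one_H {a : Z4} (ha : a ∈ Hfin) :
    qInner ((2 : ℝ)⁻¹ • toQ a) ((2 : ℝ)⁻¹ • toQ a) = 1 := by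
  rw [qInner_smul, qInner_toQ]
  have := normH a ha
  rw [nq] at this
  rw [this]
  norm_num

lemma sqrt2_inv_sq : (Real.sqrt 2)⁻¹ * (Real.sqrt 2)⁻¹ = (2 : ℝ)⁻¹ := by
  rw [← mul_inv, Real.mul_self_sqrt (by norm_num : (2:ℝ) ≥ 0)]

lemma qInner_one_O {a : Z4} (ha : a ∈ Ofin) :
    qInner (((Real.sqrt 2)⁻¹ * (2 : ℝ)⁻¹) • toQ a)
      (((Real.sqrt 2)⁻¹ * (2 : ℝ)⁻¹) • toQ a) = 1 := by
  rw [qInner_smul, qInner_toQ]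
  have := normO a ha
  rw [nq] at this
  rw [this]
  push_cast
  linear_combination (2 : ℝ) * sqrt2_inv_sq

/-! ### Main theorem -/

/-- Regarding ℍ as a four-dimensional real inner product space with
`⟨x,y⟩ = Re(x · conj y)`, the 48-element set `2O` (Hurwitz units together
with the quaternions `(ε a + ε' b)/√2`) is closed under the reflection `s_α`
for every `α` in the set: for all `α, v ∈ 2O`, the vector `v − 2⟨v,α⟩α` is
again in `2O`. Hence the 48 rotors generated by the reflections of `B₃`,
viewed as vectors in 4-dimensional Euclidean space, form a root system (a
rescaled root system of type `F₄`). -/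
theorem binaryOct_closed_under_reflections :
    ∀ α ∈ binaryOct, ∀ v ∈ binaryOct,
      v - (2 * qInner v α) • α ∈ binaryOct := by
  intro α hα v hv
  rcases hα with hα | hα
  · obtain ⟨a, ha, rfl⟩ := hurwitz_fwd hα
    rw [reflect_eq _ _ (qInner_one_H ha)]
    rcases hv with hv | hv
    · obtain ⟨b, hb, rfl⟩ := hurwitz_fwd hv
      obtain ⟨c, hc, hce⟩ := reflHH a ha b hb
      have : -((2:ℝ)⁻¹ • toQ a * star ((2:ℝ)⁻¹ • toQ b) * ((2:ℝ)⁻¹ • toQ a))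
          = (2 : ℝ)⁻¹ • toQ c := by
        rw [sandwich, ← toQ_refl3, hce, toQ_sc, smul_smul]
        norm_num
      rw [this]
      exact Or.inl (hurwitz_bwd c hc)
    · obtain ⟨b, hb, rfl⟩ := oct_fwd hv
      obtain ⟨c, hc, hce⟩ := reflHO a ha b hb
      have : -((2:ℝ)⁻¹ • toQ a * star (((Real.sqrt 2)⁻¹ * (2:ℝ)⁻¹) • toQ b)
            * ((2:ℝ)⁻¹ • toQ a))
          = ((Real.sqrt 2)⁻¹ * (2 : ℝ)⁻¹) • toQ c := by
        rw [sandwich, ← toQ_refl3, hce, toQ_sc, smul_smul]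
        push_cast
        rw [show (2:ℝ)⁻¹ * 2⁻¹ * ((Real.sqrt 2)⁻¹ * 2⁻¹) * 4 = (Real.sqrt 2)⁻¹ * 2⁻¹ by ring]
      rw [this]
      exact Or.inr (oct_bwd c hc)
  · obtain ⟨a, ha, rfl⟩ := oct_fwd hα
    rw [reflect_eq _ _ (qInner_one_O ha)]
    rcases hv with hv | hv
    · obtain ⟨b, hb, rfl⟩ := hurwitz_fwd hv
      obtain ⟨c, hc, hce⟩ := reflOH a ha b hb
      have : -((((Real.sqrt 2)⁻¹ * (2:ℝ)⁻¹) • toQ a) * star ((2:ℝ)⁻¹ • toQ b)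
            * (((Real.sqrt 2)⁻¹ * (2:ℝ)⁻¹) • toQ a))
          = (2 : ℝ)⁻¹ • toQ c := by
        rw [sandwich, ← toQ_refl3, hce, toQ_sc, smul_smul]
        push_cast
        rw [show (Real.sqrt 2)⁻¹ * 2⁻¹ * ((Real.sqrt 2)⁻¹ * 2⁻¹) * 2⁻¹ * 8
            = ((Real.sqrt 2)⁻¹ * (Real.sqrt 2)⁻¹) by ring, sqrt2_inv_sq]
      rw [this]
      exact Or.inl (hurwitz_bwd c hc)
    · obtain ⟨b, hb, rfl⟩ := oct_fwd hv
      obtain ⟨c, hc, hce⟩ := reflOO a ha b hb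
      have : -((((Real.sqrt 2)⁻¹ * (2:ℝ)⁻¹) • toQ a)
            * star (((Real.sqrt 2)⁻¹ * (2:ℝ)⁻¹) • toQ b)
            * (((Real.sqrt 2)⁻¹ * (2:ℝ)⁻¹) • toQ a))
          = ((Real.sqrt 2)⁻¹ * (2 : ℝ)⁻¹) • toQ c := by
        rw [sandwich, ← toQ_refl3, hce, toQ_sc, smul_smul]
        push_cast
        rw [show (Real.sqrt 2)⁻¹ * 2⁻¹ * ((Real.sqrt 2)⁻¹ * 2⁻¹)
              * ((Real.sqrt 2)⁻¹ * 2⁻¹) * 8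
            = ((Real.sqrt 2)⁻¹ * (Real.sqrt 2)⁻¹) * ((Real.sqrt 2)⁻¹ * 2⁻¹) * 2 by ring,
          sqrt2_inv_sq]
        ring
      rw [this]
      exact Or.inr (oct_bwd c hc)

end
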